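/- Under the hypotheses of Theorem 1 (f a positive differentiable probability density on (0,∞) with sup|f'| ≤ μ, η = lim_{y→∞}(−f(y)/f'(y)) ∈ (0,∞), finite mean, and lim_{y→∞} y·f(y) = 0; a > 0; and for each N the optimal uniform (in dB) codebook y_n = a·(1 + L_{η/a}(N))^{n−1}, 1 ≤ n ≤ N), the gradient norm of the normalized average power satisfies: for every ε > 0 there exist a constant C > 0 and an integer N_0 such that for all N ≥ N_0, ‖∇𝒫(N)‖ ≤ C·N^{−3/2 + ε}. -/

import Mathlib

open MeasureTheory Set Filter

/-- The geometric (uniform in dB) quantization levels `y n = a * r^(n-1)`. -/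
noncomputable def quantLevels (a r : ℝ) (n : ℕ) : ℝ := a * r ^ (n - 1)

/-- The normalized average power `𝒫` regarded as a function of the single level
`y n` (substituted by `t`), with the other levels `y k` fixed and `F (y (N+1)) = 1`. -/
noncomputable def avgPowerFun (F : ℝ → ℝ) (N : ℕ) (y : ℕ → ℝ) (n : ℕ) (t : ℝ) : ℝ :=
  ∑ k ∈ Finset.Icc 1 N,
    ((if k = N then (1:ℝ) else F (if k + 1 = n then t else y (k + 1))) -
        F (if k = n then t else y k)) /
      (if k = n then t else y k)

/-- Euclidean norm of the gradient of `𝒫` with respect to `y 2, …, y N`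
(`y 1` being fixed). -/
noncomputable def gradNormP (F : ℝ → ℝ) (N : ℕ) (y : ℕ → ℝ) : ℝ :=
  Real.sqrt (∑ n ∈ Finset.Icc 2 N, (deriv (avgPowerFun F N y n) (y n)) ^ 2)

lemma deriv_avgPowerFun (F : ℝ → ℝ) (fn : ℝ) (N n : ℕ) (y : ℕ → ℝ)
    (hn2 : 2 ≤ n) (hnN : n ≤ N) (hy : ∀ k, 0 < y k)
    (hFd : HasDerivAt F fn (y n)) :
    deriv (avgPowerFun F N y n) (y n) =
      fn / y (n-1) + (-fn * y n - ((if n = N then (1:ℝ) else F (y (n+1))) - F (y n))) / (y n)^2 := by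
  set c : ℝ := if n = N then (1:ℝ) else F (y (n+1)) with hc
  set D : ℕ → ℝ := fun k =>
    if k = n then (-fn * y n - (c - F (y n))) / (y n)^2
    else if k = n - 1 then fn / y (n-1) else 0 with hD
  have key : HasDerivAt (avgPowerFun F N y n) (∑ k ∈ Finset.Icc 1 N, D k) (y n) := by
    unfold avgPowerFun
    apply HasDerivAt.fun_sum
    intro k hk
    rcases eq_or_ne k n with hkn | hkn
    · subst hkn
      have h1 : ¬ (k + 1 = k) := by omega
      have hk0 : (y k) ≠ 0 := (hy k).ne'
      have hder : HasDerivAt (fun t : ℝ => (c - F t) / t)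
          (((0 - fn) * y k - (c - F (y k)) * 1) / (y k)^2) (y k) :=
        ((hasDerivAt_const (y k) c).sub hFd).div (hasDerivAt_id (y k)) hk0
      have hD' : D k = ((0 - fn) * y k - (c - F (y k)) * 1) / (y k)^2 := by
        simp only [hD, if_pos rfl]; ring_nf
      rw [hD']
      simp only [if_pos rfl, h1, if_neg h1, ← hc]
      exact hder
    · rcases eq_or_ne (k+1) n with hkn1 | hkn1
      · have hkN : ¬ (k = N) := by omega
        have hkk : k = n - 1 := by omega
        have hder : HasDerivAt (fun t : ℝ => (F t - F (y k)) / (y k)) (fn / y k) (y n) :=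
          (hFd.sub_const (F (y k))).div_const (y k)
        have hD' : D k = fn / y (n-1) := by simp only [hD, if_neg hkn, if_pos hkk]
        rw [hD', ← hkk]
        simp only [if_neg hkN, if_pos hkn1, if_neg hkn]
        exact hder
      · have hkk : ¬ (k = n - 1) := by omega
        have hD' : D k = 0 := by simp only [hD, if_neg hkn, if_neg hkk]
        rw [hD']
        simp only [if_neg hkn, if_neg hkn1]
        exact hasDerivAt_const _ _
  have hsub : ({n-1, n} : Finset ℕ) ⊆ Finset.Icc 1 N := by
    intro x hx
    simp only [Finset.mem_insert, Finset.mem_singleton] at hx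
    simp only [Finset.mem_Icc]
    omega
  have h0 : ∀ x ∈ Finset.Icc 1 N, x ∉ ({n-1, n} : Finset ℕ) → D x = 0 := by
    intro x _ hx
    simp only [Finset.mem_insert, Finset.mem_singleton, not_or] at hx
    simp only [hD, if_neg hx.2, if_neg hx.1]
  have hsum : ∑ k ∈ Finset.Icc 1 N, D k
      = fn / y (n-1) + (-fn * y n - (c - F (y n))) / (y n)^2 := by
    rw [← Finset.sum_subset hsub h0, Finset.sum_pair (show n - 1 ≠ n by omega)]
    simp only [hD, if_neg (show ¬ (n - 1 = n) by omega), if_pos rfl]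
    simp
  exact key.deriv.trans hsum

lemma int_approx (f f' : ℝ → ℝ) (μ : ℝ)
    (hfder : ∀ x ∈ Ioi (0:ℝ), HasDerivAt f (f' x) x)
    (hf'bd : ∀ x ∈ Ioi (0:ℝ), |f' x| ≤ μ)
    (hfint : IntegrableOn f (Ioi 0))
    {x z : ℝ} (hx : 0 < x) (hxz : x ≤ z) :
    |(∫ t in Ioc x z, f t) - f x * (z - x)| ≤ μ / 2 * (z - x)^2 := by
  have hsub : Ioc x z ⊆ Ioi (0:ℝ) := fun t ht => lt_of_lt_of_le hx ht.1.le
  have hsubI : Icc x z ⊆ Ioi (0:ℝ) := fun t ht => lt_of_lt_of_le hx ht.1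
  have hint : IntegrableOn f (Ioc x z) := hfint.mono_set hsub
  have hpt : ∀ t ∈ Icc x z, |f t - f x| ≤ μ * (t - x) := by
    intro t ht
    have := (convex_Icc x z).norm_image_sub_le_of_norm_hasDerivWithin_le
      (fun u hu => (hfder u (hsubI hu)).hasDerivWithinAt)
      (fun u hu => by simpa using hf'bd u (hsubI hu))
      (left_mem_Icc.mpr hxz) ht
    simpa [abs_of_nonneg (sub_nonneg.mpr ht.1), Real.norm_eq_abs] using this
  have hconst : (∫ t in Ioc x z, f x) = f x * (z - x) := by
    rw [setIntegral_const]
    rw [Real.volume_real_Ioc_of_le hxz, smul_eq_mul]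
    ring
  have hdiff : (∫ t in Ioc x z, f t) - f x * (z - x) = ∫ t in Ioc x z, (f t - f x) := by
    rw [integral_sub hint (integrableOn_const measure_Ioc_lt_top.ne), hconst]
  rw [hdiff]
  have hintsub : IntegrableOn (fun t => f t - f x) (Ioc x z) :=
    hint.sub (integrableOn_const measure_Ioc_lt_top.ne)
  have hlin : IntegrableOn (fun t => μ * (t - x)) (Ioc x z) := by
    apply Integrable.mono_measure ?_ (Measure.restrict_mono Ioc_subset_Icc_self le_rfl)
    exact (continuous_const.mul (continuous_id.sub continuous_const)).integrableOn_Icc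
  calc |∫ t in Ioc x z, (f t - f x)| ≤ ∫ t in Ioc x z, |f t - f x| := by
        simpa [Real.norm_eq_abs] using
          norm_integral_le_integral_norm (μ := volume.restrict (Ioc x z)) (fun t => f t - f x)
    _ ≤ ∫ t in Ioc x z, μ * (t - x) := by
        apply setIntegral_mono_on hintsub.abs hlin measurableSet_Ioc
        intro t ht
        exact hpt t (Ioc_subset_Icc_self ht)
    _ = μ / 2 * (z - x)^2 := by
        rw [← intervalIntegral.integral_of_le hxz]
        have h1 : ∫ t in x..z, μ * (t - x) = μ * ∫ t in x..z, (t - x) := by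
          simp [intervalIntegral.integral_const_mul]
        rw [h1]
        have h2 : ∫ t in x..z, (t - x) = (z - x)^2 / 2 := by
          have ha : ∫ t in x..z, (t - x) = (∫ t in x..z, t) - ∫ t in x..z, (x:ℝ) :=
            intervalIntegral.integral_sub (intervalIntegral.intervalIntegrable_id)
              (intervalIntegrable_const (c := x))
          rw [ha, integral_id, intervalIntegral.integral_const, smul_eq_mul]
          ring
        rw [h2]; ring

lemma F_diff (f F : ℝ → ℝ) (hfint : IntegrableOn f (Ioi 0))
    (hF : ∀ x, F x = ∫ t in Ioc (0:ℝ) x, f t)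
    {x z : ℝ} (hx : 0 < x) (hxz : x ≤ z) :
    F z - F x = ∫ t in Ioc x z, f t := by
  have h1 : IntegrableOn f (Ioc 0 x) := hfint.mono_set Ioc_subset_Ioi_self
  have h2 : IntegrableOn f (Ioc x z) := hfint.mono_set (fun t ht => lt_of_lt_of_le hx ht.1.le)
  have hu : Ioc (0:ℝ) x ∪ Ioc x z = Ioc 0 z := Ioc_union_Ioc_eq_Ioc hx.le hxz
  have hd : Disjoint (Ioc (0:ℝ) x) (Ioc x z) := by
    apply Set.disjoint_left.mpr
    intro t ht1 ht2
    exact absurd ht2.1 (not_lt.mpr ht1.2)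
  rw [hF z, hF x, ← hu, setIntegral_union hd measurableSet_Ioc h1 h2]
  ring

lemma F_bounds (f F : ℝ → ℝ) (hfpos : ∀ x ∈ Ioi (0:ℝ), 0 < f x)
    (hfint : IntegrableOn f (Ioi 0))
    (hfone : ∫ x in Ioi (0:ℝ), f x = 1)
    (hF : ∀ x, F x = ∫ t in Ioc (0:ℝ) x, f t)
    (x : ℝ) : 0 ≤ F x ∧ F x ≤ 1 := by
  constructor
  · rw [hF x]
    apply setIntegral_nonneg measurableSet_Ioc
    intro t ht
    exact (hfpos t ht.1).le
  · rw [hF x, ← hfone]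
    apply setIntegral_mono_set hfint
    · filter_upwards [ae_restrict_mem measurableSet_Ioi] with t ht
      exact (hfpos t ht).le
    · exact HasSubset.Subset.eventuallyLE Ioc_subset_Ioi_self

lemma L_basic (N : ℕ) (hN : 3 ≤ N) (L c : ℝ) (hL : 0 < L)
    (heq : L * (1 + L) ^ (N - 1) = c) :
    L ≤ c ∧ ((N:ℝ) - 1) * L^2 ≤ c := by
  have h1 : (1:ℝ) ≤ 1 + L := by linarith
  have hp : (1:ℝ) ≤ (1+L)^(N-1) := one_le_pow₀ h1
  constructor
  · calc L = L * 1 := by ring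
      _ ≤ L * (1+L)^(N-1) := by nlinarith
      _ = c := heq
  · have h2 : 1 + ((N:ℝ)-1) * L ≤ (1+L)^(N-1) := by
      have := one_add_mul_le_pow (show (-2:ℝ) ≤ L by linarith) (N-1)
      have hcast : ((N - 1 : ℕ) : ℝ) = (N:ℝ) - 1 := by
        have h3 : (1:ℕ) ≤ N := by omega
        push_cast [Nat.cast_sub h3]
        ring
      rwa [hcast] at this
    nlinarith [hL.le, sq_nonneg L]

lemma L_poly (k N : ℕ) (hk : 1 ≤ k) (hN : 2*k + 2 ≤ N) (L c : ℝ) (hL : 0 < L)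
    (heq : L * (1 + L) ^ (N - 1) = c) :
    L^(k+1) * ((N:ℝ)/(2*k))^k ≤ c := by
  set m : ℕ := (N-1)/k with hm
  have h1 : (1:ℝ) ≤ 1 + L := by linarith
  have hmk : m * k ≤ N - 1 := Nat.div_mul_le_self _ _
  have hp1 : (1+L)^(m*k) ≤ (1+L)^(N-1) := pow_le_pow_right₀ h1 (by omega)
  have hN2 : N ≤ 2 * (k * m) := by
    have h := Nat.div_add_mod (N-1) k
    rw [← hm] at h
    have h2 : (N-1) % k < k := Nat.mod_lt _ (by omega)
    omega
  have hmR : (N:ℝ)/(2*k) ≤ (m:ℝ) := by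
    rw [div_le_iff₀ (by positivity)]
    calc (N:ℝ) ≤ (2*(k*m) : ℕ) := by exact_mod_cast hN2
      _ = (m:ℝ) * (2*k) := by push_cast; ring
  have hmL : (m:ℝ) * L ≤ (1+L)^m := by
    have := one_add_mul_le_pow (show (-2:ℝ) ≤ L by linarith) m
    nlinarith
  have hp2 : ((m:ℝ)*L)^k ≤ ((1+L)^m)^k :=
    pow_le_pow_left₀ (by positivity) hmL k
  have key : L^(k+1) * (m:ℝ)^k ≤ c := by
    calc L^(k+1) * (m:ℝ)^k = L * ((m:ℝ)*L)^k := by rw [mul_pow]; ring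
      _ ≤ L * ((1+L)^m)^k := by nlinarith [pow_nonneg (by positivity : (0:ℝ) ≤ (m:ℝ)*L) k]
      _ = L * (1+L)^(m*k) := by rw [← pow_mul]
      _ ≤ L * (1+L)^(N-1) := by nlinarith [pow_pos (by linarith : (0:ℝ) < 1+L) (m*k)]
      _ = c := heq
  calc L^(k+1) * ((N:ℝ)/(2*k))^k ≤ L^(k+1) * (m:ℝ)^k := by
        have := pow_le_pow_left₀ (show (0:ℝ) ≤ (N:ℝ)/(2*k) by positivity) hmR k
        nlinarith [pow_pos hL (k+1)]
    _ ≤ c := key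

lemma L_rpow_bound (k : ℕ) (hk : 1 ≤ k) (δ B L : ℝ) (hδk : 1 ≤ δ * (k+1))
    (hB : 0 ≤ B) (N : ℕ) (hN : 1 ≤ N)
    (hpoly : L^(k+1) * (N:ℝ)^(k:ℕ) ≤ B) :
    L ≤ (max 1 B) * (N:ℝ)^(δ - 1) := by
  set B' : ℝ := max 1 B with hB'
  have hB'1 : (1:ℝ) ≤ B' := le_max_left _ _
  have hN1 : (1:ℝ) ≤ (N:ℝ) := by exact_mod_cast hN
  have hNpos : (0:ℝ) < (N:ℝ) := by linarith
  by_contra h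
  push_neg at h
  have hpos : (0:ℝ) ≤ B' * (N:ℝ)^(δ-1) := by positivity
  have h1 : (B' * (N:ℝ)^(δ-1))^(k+1) < L^(k+1) :=
    pow_lt_pow_left₀ h hpos (by omega)
  have hNk : (0:ℝ) < (N:ℝ)^(k:ℕ) := by positivity
  have hlow : (B' * (N:ℝ)^(δ-1))^(k+1) * (N:ℝ)^(k:ℕ) < L^(k+1) * (N:ℝ)^(k:ℕ) :=
    mul_lt_mul_of_pos_right h1 hNk
  have h2 : (B' * (N:ℝ)^(δ-1))^(k+1) * (N:ℝ)^(k:ℕ)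
      = B'^(k+1) * (N:ℝ)^((δ-1)*(k+1) + k) := by
    rw [mul_pow, ← Real.rpow_natCast ((N:ℝ)^(δ-1)) (k+1), ← Real.rpow_mul hNpos.le,
      mul_assoc, ← Real.rpow_natCast (N:ℝ) k, ← Real.rpow_add hNpos]
    push_cast
    ring_nf
  have he : (0:ℝ) ≤ (δ-1)*(k+1) + k := by push_cast; nlinarith
  have h4 : (1:ℝ) ≤ (N:ℝ)^((δ-1)*(k+1) + k) := by
    have h := Real.rpow_le_rpow_of_exponent_le hN1 he
    rwa [Real.rpow_zero] at h
  have h5 : B ≤ B'^(k+1) := by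
    calc B ≤ B' := le_max_right _ _
      _ = B'^1 := (pow_one B').symm
      _ ≤ B'^(k+1) := pow_le_pow_right₀ hB'1 (by omega)
  have h6 : B'^(k+1) ≤ B'^(k+1) * (N:ℝ)^((δ-1)*(k+1) + k) := by
    nlinarith [pow_pos (lt_of_lt_of_le one_pos hB'1) (k+1)]
  rw [h2] at hlow
  linarith


lemma term_bound (f f' F : ℝ → ℝ) (μ η a l : ℝ) (N n : ℕ)
    (hμ : 0 < μ) (hη0 : 0 < η) (ha : 0 < a)
    (hfpos : ∀ x ∈ Ioi (0:ℝ), 0 < f x)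
    (hfder : ∀ x ∈ Ioi (0:ℝ), HasDerivAt f (f' x) x)
    (hf'bd : ∀ x ∈ Ioi (0:ℝ), |f' x| ≤ μ)
    (hfint : IntegrableOn f (Ioi 0))
    (hfone : ∫ x in Ioi (0:ℝ), f x = 1)
    (hF : ∀ x, F x = ∫ t in Ioc (0:ℝ) x, f t)
    (hF' : ∀ x ∈ Ioi (0:ℝ), HasDerivAt F (f x) x)
    (hLpos : 0 < l) (hLeq : l * (1 + l) ^ (N - 1) = η / a)
    (hfY : quantLevels a (1+l) N * f (quantLevels a (1+l) N) < 1)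
    (hN3 : 3 ≤ N) (hn2 : 2 ≤ n) (hnN : n ≤ N) :
    |deriv (avgPowerFun F N (quantLevels a (1+l)) n) (quantLevels a (1+l) n)|
      ≤ (max (μ/2) ((1 + η/a)/η^2)) * l^2 := by
  set r : ℝ := 1 + l with hrdef
  have hr1 : (1:ℝ) ≤ r := by rw [hrdef]; linarith
  have hrpos : (0:ℝ) < r := by linarith
  set y : ℕ → ℝ := quantLevels a r with hydef
  set K : ℝ := max (μ/2) ((1 + η/a)/η^2) with hKdef
  have hKμ : μ/2 ≤ K := le_max_left _ _
  have hKη : (1 + η/a)/η^2 ≤ K := le_max_right _ _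
  have hy : ∀ j, 0 < y j := by
    intro j
    rw [hydef]
    unfold quantLevels
    positivity
  have hyrel : ∀ n : ℕ, 2 ≤ n → y n = y (n-1) * r := by
    intro n hn
    rw [hydef]
    unfold quantLevels
    rw [mul_assoc, ← pow_succ]
    congr 2
    omega
  have hyrel2 : ∀ n : ℕ, 1 ≤ n → y (n+1) = y n * r := by
    intro n hn
    rw [hydef]
    unfold quantLevels
    rw [mul_assoc, ← pow_succ]
    congr 2
    omega
  have hyN : y N * l = η := by
    rw [hydef]
    unfold quantLevels
    calc a * r^(N-1) * l = a * (l * r^(N-1)) := by ring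
      _ = a * (η/a) := by rw [hrdef] at *; rw [hLeq]
      _ = η := by field_simp
  have hyn := hy n
  have hder := deriv_avgPowerFun F (f (y n)) N n y hn2 hnN hy (hF' (y n) (Set.mem_Ioi.mpr hyn))
  have hrelm : y n = y (n-1) * r := hyrel n hn2
  rcases eq_or_ne n N with hnN' | hnN'
  · subst hnN'
    rw [if_pos rfl] at hder
    have hfn1 : f (y n) * y n ≤ 1 := by
      rw [mul_comm]
      exact hfY.le
    have hfnpos := hfpos (y n) (Set.mem_Ioi.mpr hyn)
    have hFb := F_bounds f F hfpos hfint hfone hF (y n)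
    have hfnb : f (y n) * η ≤ l := by
      have h := mul_le_mul_of_nonneg_right hfn1 hLpos.le
      calc f (y n) * η = f (y n) * y n * l := by rw [← hyN]; ring
        _ ≤ 1 * l := h
        _ = l := one_mul l
    have hηa : l ≤ η/a := (L_basic n (by omega) l (η/a) hLpos hLeq).1
    have hE : f (y n) / y (n-1) + (-(f (y n)) * y n - (1 - F (y n))) / (y n)^2
        = (f (y n) * η * l^2 - (1 - F (y n)) * l^2) / η^2 := by
      rw [← hyN, hrelm]
      have h1 : y (n-1) ≠ 0 := (hy (n-1)).ne'
      have h2 : r ≠ 0 := hrpos.ne'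
      have h3 : l ≠ 0 := hLpos.ne'
      rw [hrdef]
      field_simp
      ring
    rw [hder, hE]
    rw [abs_div, abs_of_pos (pow_pos hη0 2), div_le_iff₀ (pow_pos hη0 2)]
    have u1 : f (y n) * η * l^2 ≤ l * l^2 :=
      mul_le_mul_of_nonneg_right hfnb (sq_nonneg l)
    have u2 : 0 ≤ (1 - F (y n)) * l^2 :=
      mul_nonneg (by linarith [hFb.2]) (sq_nonneg l)
    have u3 : (1 - F (y n)) * l^2 ≤ 1 * l^2 :=
      mul_le_mul_of_nonneg_right (by linarith [hFb.1]) (sq_nonneg l)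
    have u4 : 0 ≤ f (y n) * η * l^2 :=
      mul_nonneg (mul_nonneg hfnpos.le hη0.le) (sq_nonneg l)
    have u5 : l * l^2 ≤ (η/a) * l^2 := mul_le_mul_of_nonneg_right hηa (sq_nonneg l)
    have u6 : (1 + η/a) * l^2 ≤ (K * η^2) * l^2 := by
      rw [div_le_iff₀ (pow_pos hη0 2)] at hKη
      exact mul_le_mul_of_nonneg_right hKη (sq_nonneg l)
    have hnum : |f (y n) * η * l^2 - (1 - F (y n)) * l^2| ≤ l * l^2 + 1 * l^2 := by
      rw [abs_le]
      constructor
      · linarith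
      · linarith
    calc |f (y n) * η * l^2 - (1 - F (y n)) * l^2| ≤ l * l^2 + 1 * l^2 := hnum
      _ ≤ (1 + η/a) * l^2 := by linarith
      _ ≤ (K * η^2) * l^2 := u6
      _ = K * l^2 * η^2 := by ring
  · have hnltN : n < N := lt_of_le_of_ne hnN hnN'
    rw [if_neg hnN'] at hder
    have hrel2 : y (n+1) = y n * r := hyrel2 n (by omega)
    have hle : y n ≤ y (n+1) := by
      rw [hrel2]
      exact le_mul_of_one_le_right (hy n).le hr1
    have hFdiff := F_diff f F hfint hF (hy n) hle
    have happ := int_approx f f' μ hfder hf'bd hfint (hy n) hle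
    have halg : f (y n) / y (n-1) + (-(f (y n)) * y n - (F (y (n+1)) - F (y n))) / (y n)^2
        = (f (y n) * (y (n+1) - y n) - (F (y (n+1)) - F (y n))) / (y n)^2 := by
      have h1 : y (n-1) ≠ 0 := (hy (n-1)).ne'
      have h2 : r ≠ 0 := hrpos.ne'
      rw [hrel2]
      rw [hrelm]
      field_simp
      ring
    have hΔ : y (n+1) - y n = y n * l := by
      rw [hrel2, hrdef]; ring
    rw [hder, halg, hFdiff]
    rw [abs_div, abs_of_pos (pow_pos hyn 2), div_le_iff₀ (pow_pos hyn 2)]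
    calc |f (y n) * (y (n+1) - y n) - ∫ t in Ioc (y n) (y (n+1)), f t|
        = |(∫ t in Ioc (y n) (y (n+1)), f t) - f (y n) * (y (n+1) - y n)| := abs_sub_comm _ _
      _ ≤ μ/2 * (y (n+1) - y n)^2 := happ
      _ = μ/2 * (l^2 * (y n)^2) := by rw [hΔ]; ring
      _ ≤ K * (l^2 * (y n)^2) :=
          mul_le_mul_of_nonneg_right hKμ (by positivity)
      _ = K * l^2 * (y n)^2 := by ring

theorem stmt8
    (f f' F : ℝ → ℝ) (μ η a : ℝ)
    (hμ : 0 < μ) (hη0 : 0 < η) (ha : 0 < a)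
    (hfpos : ∀ x ∈ Ioi (0:ℝ), 0 < f x)
    (hfder : ∀ x ∈ Ioi (0:ℝ), HasDerivAt f (f' x) x)
    (hf'bd : ∀ x ∈ Ioi (0:ℝ), |f' x| ≤ μ)
    (hfint : IntegrableOn f (Ioi 0))
    (hfone : ∫ x in Ioi (0:ℝ), f x = 1)
    (hmean : IntegrableOn (fun y : ℝ => y * f y) (Ioi 0))
    (hηlim : Tendsto (fun y : ℝ => -f y / f' y) atTop (nhds η))
    (hyf : Tendsto (fun y : ℝ => y * f y) atTop (nhds 0))
    (hF : ∀ x, F x = ∫ t in Ioc (0:ℝ) x, f t)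
    (hF' : ∀ x ∈ Ioi (0:ℝ), HasDerivAt F (f x) x)
    (L : ℕ → ℝ)
    (hL : ∀ N : ℕ, 3 ≤ N → 0 < L N ∧ L N * (1 + L N) ^ (N - 1) = η / a) :
    ∀ ε : ℝ, 0 < ε →
      ∃ C : ℝ, 0 < C ∧ ∃ N₀ : ℕ, ∀ N : ℕ, N₀ ≤ N →
        gradNormP F N (quantLevels a (1 + L N)) ≤
          C * (N : ℝ) ^ (-(3:ℝ)/2 + ε) := by
  intro ε hε
  set δ : ℝ := ε / 2 with hδdef
  have hδ : 0 < δ := by positivity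
  set k : ℕ := ⌈1/δ⌉₊ with hkdef
  have hk1 : 1 ≤ k := by
    rw [hkdef]
    exact Nat.ceil_pos.mpr (by positivity)
  have hkδ : 1/δ ≤ (k:ℝ) := Nat.le_ceil _
  have hδk : 1 ≤ δ * ((k:ℝ)+1) := by
    rw [div_le_iff₀ hδ] at hkδ
    nlinarith
  obtain ⟨Y₀, hY₀⟩ := eventually_atTop.mp
    (hyf.eventually_lt_const (show (0:ℝ) < 1 by norm_num))
  set Y₁ : ℝ := max Y₀ 1 with hY₁def
  have hY₁pos : (0:ℝ) < Y₁ := lt_of_lt_of_le one_pos (le_max_right _ _)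
  set B : ℝ := (η/a) * (2*(k:ℝ))^k with hBdef
  have hBpos : 0 < B := by positivity
  set B' : ℝ := max 1 B with hB'def
  have hB'pos : (0:ℝ) < B' := lt_of_lt_of_le one_pos (le_max_left _ _)
  set K : ℝ := max (μ/2) ((1 + η/a)/η^2) with hKdef
  have hKpos : 0 < K := lt_of_lt_of_le (by positivity) (le_max_left _ _)
  have hKμ : μ/2 ≤ K := le_max_left _ _
  have hKη : (1 + η/a)/η^2 ≤ K := le_max_right _ _
  refine ⟨K * B'^2, by positivity, ?_⟩
  set A : ℝ := (η/a) * (Y₁/η)^2 with hAdef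
  refine ⟨max (max 3 (2*k+2)) (⌈A⌉₊ + 2), ?_⟩
  intro N hN
  have hN3 : 3 ≤ N := le_trans (le_trans (le_max_left _ _) (le_max_left _ _)) hN
  have hN2k : 2*k+2 ≤ N := le_trans (le_trans (le_max_right _ _) (le_max_left _ _)) hN
  have hNA : ⌈A⌉₊ + 2 ≤ N := le_trans (le_max_right _ _) hN
  obtain ⟨hLpos, hLeq⟩ := hL N hN3
  set l : ℝ := L N with hldef
  set r : ℝ := 1 + l with hrdef
  have hr1 : (1:ℝ) ≤ r := by rw [hrdef]; linarith
  have hrpos : (0:ℝ) < r := by linarith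
  set y : ℕ → ℝ := quantLevels a r with hydef
  have hy : ∀ j, 0 < y j := by
    intro j
    rw [hydef]
    unfold quantLevels
    positivity
  obtain ⟨hlηa, hlsq⟩ := L_basic N hN3 l (η/a) hLpos hLeq
  have hηa : (0:ℝ) < η / a := by positivity
  have hyrel : ∀ n : ℕ, 2 ≤ n → y n = y (n-1) * r := by
    intro n hn
    rw [hydef]
    unfold quantLevels
    rw [mul_assoc, ← pow_succ]
    congr 2
    omega
  have hyrel2 : ∀ n : ℕ, 1 ≤ n → y (n+1) = y n * r := by
    intro n hn
    rw [hydef]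
    unfold quantLevels
    rw [mul_assoc, ← pow_succ]
    congr 2
    omega
  have hyN : y N * l = η := by
    rw [hydef]
    unfold quantLevels
    calc a * r^(N-1) * l = a * (l * r^(N-1)) := by ring
      _ = a * (η/a) := by rw [hrdef] at *; rw [hLeq]
      _ = η := by field_simp
  have hNA' : A ≤ (N:ℝ) - 1 := by
    have h1 : A ≤ (⌈A⌉₊ : ℝ) := Nat.le_ceil _
    have h2 : ((⌈A⌉₊ + 2 : ℕ) : ℝ) ≤ (N:ℝ) := by exact_mod_cast hNA
    push_cast at h2
    linarith
  have hlY : l * Y₁ ≤ η := by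
    have h1 : l^2 * Y₁^2 ≤ η^2 := by
      have hA : A * l^2 ≤ ((N:ℝ)-1) * l^2 := mul_le_mul_of_nonneg_right hNA' (sq_nonneg l)
      rw [hAdef] at hA
      have h2 : (η/a) * (Y₁/η)^2 * l^2 ≤ η/a := le_trans hA hlsq
      have h3 : (Y₁/η)^2 * l^2 ≤ 1 := by
        have := mul_le_mul_of_nonneg_left h2 (le_of_lt (by positivity : (0:ℝ) < a/η))
        calc (Y₁/η)^2 * l^2 = (a/η) * ((η/a) * (Y₁/η)^2 * l^2) := by field_simp
          _ ≤ (a/η) * (η/a) := this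
          _ = 1 := by field_simp
      calc l^2 * Y₁^2 = ((Y₁/η)^2 * l^2) * η^2 := by field_simp
        _ ≤ 1 * η^2 := mul_le_mul_of_nonneg_right h3 (sq_nonneg η)
        _ = η^2 := by ring
    have h4 : (l*Y₁)^2 ≤ η^2 := by calc (l*Y₁)^2 = l^2 * Y₁^2 := by ring
                                      _ ≤ η^2 := h1
    have h5 := Real.sqrt_le_sqrt h4
    rwa [Real.sqrt_sq (by positivity), Real.sqrt_sq hη0.le] at h5
  have hyNY : Y₁ ≤ y N := by
    have h1 : Y₁ * l ≤ y N * l := by rw [hyN]; linarith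
    exact le_of_mul_le_mul_right h1 hLpos
  -- per-term bound
  have hterm : ∀ n ∈ Finset.Icc 2 N, |deriv (avgPowerFun F N y n) (y n)| ≤ K * l^2 := by
    intro n hn
    rw [Finset.mem_Icc] at hn
    have hfY : quantLevels a (1+l) N * f (quantLevels a (1+l) N) < 1 := by
      rw [← hrdef, ← hydef]
      exact hY₀ (y N) (le_trans (le_max_left Y₀ 1) hyNY)
    have h := term_bound f f' F μ η a l N n hμ hη0 ha hfpos hfder hf'bd hfint hfone hF hF'
      hLpos hLeq hfY hN3 hn.1 hn.2
    rw [← hrdef, ← hydef, ← hKdef] at h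
    exact h
  -- sum bound
  have hKl : (0:ℝ) ≤ K * l^2 := by positivity
  have hsum : ∑ n ∈ Finset.Icc 2 N, (deriv (avgPowerFun F N y n) (y n))^2
      ≤ (N:ℝ) * (K*l^2)^2 := by
    calc ∑ n ∈ Finset.Icc 2 N, (deriv (avgPowerFun F N y n) (y n))^2
        ≤ ∑ _n ∈ Finset.Icc 2 N, (K*l^2)^2 := by
          apply Finset.sum_le_sum
          intro n hn
          have h := hterm n hn
          calc (deriv (avgPowerFun F N y n) (y n))^2
              = |deriv (avgPowerFun F N y n) (y n)|^2 := (sq_abs _).symm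
            _ ≤ (K*l^2)^2 := pow_le_pow_left₀ (abs_nonneg _) h 2
      _ = ((Finset.Icc 2 N).card : ℝ) * (K*l^2)^2 := by
          rw [Finset.sum_const, nsmul_eq_mul]
      _ ≤ (N:ℝ) * (K*l^2)^2 := by
          have hc : (Finset.Icc 2 N).card ≤ N := by
            rw [Nat.card_Icc]; omega
          have hc' : ((Finset.Icc 2 N).card : ℝ) ≤ (N:ℝ) := by exact_mod_cast hc
          exact mul_le_mul_of_nonneg_right hc' (sq_nonneg (K*l^2))
  have hgn : gradNormP F N y ≤ Real.sqrt ((N:ℝ) * (K*l^2)^2) := by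
    unfold gradNormP
    exact Real.sqrt_le_sqrt hsum
  have hsq : Real.sqrt ((N:ℝ)*(K*l^2)^2) = Real.sqrt (N:ℝ) * (K*l^2) := by
    rw [Real.sqrt_mul (Nat.cast_nonneg N), Real.sqrt_sq hKl]
  have hNpos : (0:ℝ) < (N:ℝ) := by
    have : (3:ℝ) ≤ (N:ℝ) := by exact_mod_cast hN3
    linarith
  -- L bound via polynomial estimate
  have hpoly' : l^(k+1) * (N:ℝ)^(k:ℕ) ≤ B := by
    have hp := L_poly k N hk1 hN2k l (η/a) hLpos hLeq
    rw [div_pow] at hp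
    have h2k : (0:ℝ) < (2*(k:ℝ))^k := by
      have : (0:ℝ) < 2*(k:ℝ) := by
        have : (1:ℝ) ≤ (k:ℝ) := by exact_mod_cast hk1
        linarith
      positivity
    have heq2 : l^(k+1) * ((N:ℝ)^k/(2*(k:ℝ))^k) * (2*(k:ℝ))^k = l^(k+1) * (N:ℝ)^(k:ℕ) := by
      field_simp
    have := mul_le_mul_of_nonneg_right hp h2k.le
    rw [heq2] at this
    rw [hBdef]
    linarith
  have hLb : l ≤ B' * (N:ℝ)^(δ - 1) := by
    rw [hB'def]
    exact L_rpow_bound k hk1 δ B l hδk hBpos.le N (by omega) hpoly'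
  -- finish
  have hfinal : Real.sqrt (N:ℝ) * (K * l^2) ≤ K * B'^2 * (N:ℝ)^(-(3:ℝ)/2 + ε) := by
    have h1 : l^2 ≤ (B' * (N:ℝ)^(δ-1))^2 := pow_le_pow_left₀ hLpos.le hLb 2
    have h2 : (B' * (N:ℝ)^(δ-1))^2 = B'^2 * (N:ℝ)^((δ-1)*2) := by
      rw [mul_pow]
      congr 1
      rw [← Real.rpow_natCast ((N:ℝ)^(δ-1)) 2, ← Real.rpow_mul hNpos.le]
      norm_num
    have h3 : Real.sqrt (N:ℝ) = (N:ℝ)^((1:ℝ)/2) := Real.sqrt_eq_rpow (N:ℝ)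
    rw [h3]
    have hN12 : (0:ℝ) ≤ (N:ℝ)^((1:ℝ)/2) := Real.rpow_nonneg hNpos.le _
    calc (N:ℝ)^((1:ℝ)/2) * (K * l^2)
        ≤ (N:ℝ)^((1:ℝ)/2) * (K * (B'^2 * (N:ℝ)^((δ-1)*2))) := by
          apply mul_le_mul_of_nonneg_left _ hN12
          apply mul_le_mul_of_nonneg_left _ hKpos.le
          rw [← h2]; exact h1
      _ = K * B'^2 * ((N:ℝ)^((1:ℝ)/2) * (N:ℝ)^((δ-1)*2)) := by ring
      _ = K * B'^2 * (N:ℝ)^(-(3:ℝ)/2 + ε) := by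
          rw [← Real.rpow_add hNpos]
          congr 1
          rw [hδdef]
          ring
  calc gradNormP F N y ≤ Real.sqrt ((N:ℝ)*(K*l^2)^2) := hgn
    _ = Real.sqrt (N:ℝ) * (K*l^2) := hsq
    _ ≤ K * B'^2 * (N:ℝ)^(-(3:ℝ)/2 + ε) := hfinal
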